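/- Let A be a nonzero real m×n matrix of rank r, α > 0, β^I = max_i ‖A_{I_i,:}‖₂²/‖A_{I_i,:}‖_F² for a row partition {I_1,…,I_s}, and suppose 0 < α < 2/β^I. For x ∈ ℝ^n with x − A†b ∈ ran(Aᵀ), define x̂ = x − (α/‖A_{I_i,:}‖_F²)(A_{I_i,:})ᵀ A_{I_i,:}(x − A†b), where i is sampled with probability ‖A_{I_i,:}‖_F²/‖A‖_F². Then E‖x̂ − A†b‖₂² ≤ η ‖x − A†b‖₂², where η = 1 − (2α − α²β^I)σ_r(A)²/‖A‖_F². -/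

import Mathlib

open Matrix

/-- The squared Frobenius norm of a real matrix. -/
noncomputable def frobSq {ι κ : Type*} [Fintype ι] [Fintype κ] (A : Matrix ι κ ℝ) : ℝ :=
  ∑ i, ∑ j, (A i j) ^ 2

/-- The spectral (ℓ₂ operator) norm of a real matrix. -/
noncomputable def specNorm {ι κ : Type*} [Fintype ι] [Fintype κ] [DecidableEq κ]
    (A : Matrix ι κ ℝ) : ℝ :=
  ‖LinearMap.toContinuousLinearMap (Matrix.toEuclideanLin A)‖

/-- The squared Euclidean norm of a vector. -/
noncomputable def norm2Sq {ι : Type*} [Fintype ι] (v : ι → ℝ) : ℝ := ∑ i, (v i) ^ 2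

/-- `P` is the Moore–Penrose pseudoinverse of `A`. -/
def IsMoorePenrose {m n : ℕ} (A : Matrix (Fin m) (Fin n) ℝ)
    (P : Matrix (Fin n) (Fin m) ℝ) : Prop :=
  A * P * A = A ∧ P * A * P = P ∧ (A * P)ᵀ = A * P ∧ (P * A)ᵀ = P * A

/-- The row submatrix of `A` indexed by the finite set `I`. -/
def rowSub {m n : ℕ} (A : Matrix (Fin m) (Fin n) ℝ) (I : Finset (Fin m)) :
    Matrix I (Fin n) ℝ :=
  A.submatrix (fun i => (i : Fin m)) id

section Aux

variable {ι κ : Type*} [Fintype ι] [Fintype κ]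

lemma norm2Sq_nonneg (v : ι → ℝ) : 0 ≤ norm2Sq v :=
  Finset.sum_nonneg fun _ _ => sq_nonneg _

lemma norm2Sq_eq_norm (v : ι → ℝ) :
    norm2Sq v = ‖(WithLp.equiv 2 (ι → ℝ)).symm v‖ ^ 2 := by
  rw [← real_inner_self_eq_norm_sq]
  simp only [norm2Sq, PiLp.inner_apply, sq]
  simp [sq]

lemma norm2Sq_eq_dot (v : ι → ℝ) : norm2Sq v = v ⬝ᵥ v := by
  simp [norm2Sq, dotProduct, sq]

lemma norm2Sq_eq_zero {v : ι → ℝ} (h : norm2Sq v = 0) : v = 0 := by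
  funext i
  have := (Finset.sum_eq_zero_iff_of_nonneg (fun i _ => sq_nonneg (v i))).mp h i (Finset.mem_univ i)
  simpa using pow_eq_zero_iff (n := 2) (by norm_num) |>.mp this

lemma frobSq_nonneg (A : Matrix ι κ ℝ) : 0 ≤ frobSq A :=
  Finset.sum_nonneg fun _ _ => Finset.sum_nonneg fun _ _ => sq_nonneg _

lemma frobSq_pos {A : Matrix ι κ ℝ} (hA : A ≠ 0) : 0 < frobSq A := by
  rcases (frobSq_nonneg A).lt_or_eq with h | h
  · exact h
  · exfalso; apply hA; ext i j
    have h1 := (Finset.sum_eq_zero_iff_of_nonneg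
      (fun i _ => Finset.sum_nonneg fun j _ => sq_nonneg (A i j))).mp h.symm i (Finset.mem_univ i)
    have h2 := (Finset.sum_eq_zero_iff_of_nonneg (fun j _ => sq_nonneg (A i j))).mp h1 j
      (Finset.mem_univ j)
    simpa using pow_eq_zero_iff (n := 2) (by norm_num) |>.mp h2

lemma specNorm_pos [DecidableEq κ] {A : Matrix ι κ ℝ} (hA : A ≠ 0) : 0 < specNorm A := by
  rcases (norm_nonneg (LinearMap.toContinuousLinearMap (Matrix.toEuclideanLin A))).lt_or_eq
    with h | h
  · exact h
  · exfalso; apply hA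
    have : LinearMap.toContinuousLinearMap (Matrix.toEuclideanLin A) = 0 := by
      rwa [eq_comm, norm_eq_zero] at h
    have h2 : Matrix.toEuclideanLin A = 0 := by
      apply LinearMap.ext; intro v
      have := ContinuousLinearMap.ext_iff.mp this v
      simpa using this
    exact (LinearEquiv.map_eq_zero_iff Matrix.toEuclideanLin).mp h2

lemma norm2Sq_mulVec_le [DecidableEq κ] (A : Matrix ι κ ℝ) (v : κ → ℝ) :
    norm2Sq (A *ᵥ v) ≤ specNorm A ^ 2 * norm2Sq v := by
  rw [norm2Sq_eq_norm, norm2Sq_eq_norm]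
  have h1 : (WithLp.equiv 2 (ι → ℝ)).symm (A *ᵥ v)
      = LinearMap.toContinuousLinearMap (Matrix.toEuclideanLin A)
          ((WithLp.equiv 2 (κ → ℝ)).symm v) := by
    simp [Matrix.toEuclideanLin_apply_piLp_toLp]
  rw [h1, ← mul_pow]
  exact pow_le_pow_left₀ (norm_nonneg _) (ContinuousLinearMap.le_opNorm _ _) 2

lemma specNorm_transpose [DecidableEq ι] [DecidableEq κ]
    (A : Matrix ι κ ℝ) : specNorm Aᵀ = specNorm A := by
  unfold specNorm
  have h1 : Aᵀ = Aᴴ := (conjTranspose_eq_transpose_of_trivial A).symm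
  rw [h1, Matrix.toEuclideanLin_conjTranspose_eq_adjoint,
    LinearMap.adjoint_eq_toCLM_adjoint]
  simp only [LinearMap.coe_toContinuousLinearMap]
  exact (ContinuousLinearMap.adjoint).norm_map _

lemma norm2Sq_mulVec_eq_dot (A : Matrix ι κ ℝ) (v : κ → ℝ) :
    norm2Sq (A *ᵥ v) = v ⬝ᵥ (Aᵀ * A) *ᵥ v := by
  rw [norm2Sq_eq_dot, ← mulVec_mulVec, dotProduct_mulVec v, vecMul_transpose]

lemma norm2Sq_sub_smul (e v : ι → ℝ) (c : ℝ) :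
    norm2Sq (e - c • v) = norm2Sq e - 2*c*(e ⬝ᵥ v) + c^2 * norm2Sq v := by
  simp only [norm2Sq, dotProduct, Pi.sub_apply, Pi.smul_apply, smul_eq_mul, Finset.mul_sum,
    ← Finset.sum_add_distrib, ← Finset.sum_sub_distrib]
  exact Finset.sum_congr rfl fun j _ => by ring

lemma spectral_bound {m n : ℕ} (A : Matrix (Fin m) (Fin n) ℝ)
    (hH : (Aᵀ * A).IsHermitian) (σr : ℝ)
    (hleast : IsLeast {x : ℝ | ∃ i, hH.eigenvalues i ≠ 0 ∧ x = hH.eigenvalues i} (σr ^ 2))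
    (w : Fin m → ℝ) (e : Fin n → ℝ) (he : e = Aᵀ *ᵥ w) :
    σr ^ 2 * norm2Sq e ≤ norm2Sq (A *ᵥ e) := by
  set T := Aᵀ * A with hT
  have hTsymm : Tᵀ = T := by
    have := hH; rwa [Matrix.IsHermitian, conjTranspose_eq_transpose_of_trivial] at this
  set bb := hH.eigenvectorBasis with hbb
  set lam := hH.eigenvalues with hlam
  set e' : EuclideanSpace ℝ (Fin n) := (WithLp.equiv 2 (Fin n → ℝ)).symm e with he'
  set c : Fin n → ℝ := fun j => ⇑(bb j) ⬝ᵥ e with hc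
  have hbe : ∀ j, T *ᵥ ⇑(bb j) = lam j • ⇑(bb j) := fun j => hH.mulVec_eigenvectorBasis j
  have hinner_dot : ∀ (u v : Fin n → ℝ),
      (inner ℝ ((WithLp.equiv 2 (Fin n → ℝ)).symm u) ((WithLp.equiv 2 (Fin n → ℝ)).symm v) : ℝ)
        = u ⬝ᵥ v := by
    intro u v; simp [PiLp.inner_apply, dotProduct, mul_comm]
  have hpars : ∑ j, c j ^ 2 = norm2Sq e := by
    have h := bb.sum_inner_mul_inner e' e'
    rw [norm2Sq_eq_dot, ← hinner_dot e e]
    rw [← h]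
    refine Finset.sum_congr rfl fun j _ => ?_
    have h1 : (inner ℝ e' (bb j) : ℝ) = c j := by
      rw [real_inner_comm]
      rw [hc]
      have : (bb j : EuclideanSpace ℝ (Fin n))
          = (WithLp.equiv 2 (Fin n → ℝ)).symm ⇑(bb j) := rfl
      rw [this, hinner_dot]
    have h2 : (inner ℝ (bb j) e' : ℝ) = c j := by
      rw [hc]
      have : (bb j : EuclideanSpace ℝ (Fin n))
          = (WithLp.equiv 2 (Fin n → ℝ)).symm ⇑(bb j) := rfl
      rw [this, hinner_dot]
    rw [h1, h2, sq]
  have hdotbbT : ∀ j, ⇑(bb j) ⬝ᵥ (T *ᵥ e) = lam j * c j := by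
    intro j
    rw [dotProduct_mulVec, ← hTsymm, vecMul_transpose, hbe j, smul_dotProduct]
    simp [hc]
  have hquad : e ⬝ᵥ (T *ᵥ e) = ∑ j, lam j * c j ^ 2 := by
    have h := bb.sum_inner_mul_inner e' ((WithLp.equiv 2 (Fin n → ℝ)).symm (T *ᵥ e))
    have hL : (inner ℝ e' ((WithLp.equiv 2 (Fin n → ℝ)).symm (T *ᵥ e)) : ℝ) = e ⬝ᵥ (T *ᵥ e) :=
      hinner_dot _ _
    rw [← hL, ← h]
    refine Finset.sum_congr rfl fun j _ => ?_
    have h1 : (inner ℝ e' (bb j) : ℝ) = c j := by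
      rw [real_inner_comm]
      have : (bb j : EuclideanSpace ℝ (Fin n))
          = (WithLp.equiv 2 (Fin n → ℝ)).symm ⇑(bb j) := rfl
      rw [this, hinner_dot]
    have h2 : (inner ℝ (bb j) ((WithLp.equiv 2 (Fin n → ℝ)).symm (T *ᵥ e)) : ℝ)
        = lam j * c j := by
      have : (bb j : EuclideanSpace ℝ (Fin n))
          = (WithLp.equiv 2 (Fin n → ℝ)).symm ⇑(bb j) := rfl
      rw [this, hinner_dot, hdotbbT]
    rw [h1, h2]; ring
  have hzero : ∀ j, lam j = 0 → c j = 0 := by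
    intro j hj
    have h0 : A *ᵥ ⇑(bb j) = 0 := by
      apply norm2Sq_eq_zero
      rw [norm2Sq_mulVec_eq_dot, ← hT, hbe j, hj, zero_smul, dotProduct_zero]
    simp only [hc]
    rw [he, dotProduct_mulVec, vecMul_transpose, h0, zero_dotProduct]
  rw [norm2Sq_mulVec_eq_dot, ← hT, hquad, ← hpars, Finset.mul_sum]
  refine Finset.sum_le_sum fun j _ => ?_
  rcases eq_or_ne (lam j) 0 with h | h
  · rw [h, hzero j h]; ring_nf; simp
  · have : σr ^ 2 ≤ lam j := hleast.2 ⟨j, h, rfl⟩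
    nlinarith [sq_nonneg (c j)]

end Aux

theorem stmt13 {m n s : ℕ} (A : Matrix (Fin m) (Fin n) ℝ) (hA : A ≠ 0)
    (hH : (Aᵀ * A).IsHermitian) (σr : ℝ) (hσr : 0 < σr)
    (hleast : IsLeast {x : ℝ | ∃ i, hH.eigenvalues i ≠ 0 ∧ x = hH.eigenvalues i} (σr ^ 2))
    (P : Matrix (Fin n) (Fin m) ℝ) (hP : IsMoorePenrose A P) (b : Fin m → ℝ)
    (B : Fin s → Finset (Fin m))
    (hdisj : ∀ i j, i ≠ j → Disjoint (B i) (B j))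
    (hcover : ∀ l : Fin m, ∃ i, l ∈ B i)
    (hne : ∀ i, rowSub A (B i) ≠ 0)
    (βI : ℝ)
    (hβ : IsGreatest
      {x : ℝ | ∃ i, x = specNorm (rowSub A (B i)) ^ 2 / frobSq (rowSub A (B i))} βI)
    (α : ℝ) (hα1 : 0 < α) (hα2 : α < 2 / βI)
    (x : Fin n → ℝ)
    (hx : ∃ w : Fin m → ℝ, x - P.mulVec b = Aᵀ.mulVec w) :
    ∑ i, (frobSq (rowSub A (B i)) / frobSq A) *
        norm2Sq (x - (α / frobSq (rowSub A (B i))) •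
            ((rowSub A (B i))ᵀ * rowSub A (B i)).mulVec (x - P.mulVec b) - P.mulVec b)
      ≤ (1 - (2 * α - α ^ 2 * βI) * σr ^ 2 / frobSq A) * norm2Sq (x - P.mulVec b) := by
  obtain ⟨w, hw⟩ := hx
  set e : Fin n → ℝ := x - P.mulVec b with he
  have hFpos : 0 < frobSq A := frobSq_pos hA
  have hfpos : ∀ i, 0 < frobSq (rowSub A (B i)) := fun i => frobSq_pos (hne i)
  -- βI is positive
  have hmne : Nonempty (Fin m) := by
    by_contra h
    apply hA; ext l j
    exact absurd ⟨l⟩ h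
  obtain ⟨l0⟩ := hmne
  obtain ⟨i0, -⟩ := hcover l0
  have hβpos : 0 < βI :=
    lt_of_lt_of_le (div_pos (pow_pos (specNorm_pos (hne i0)) 2) (hfpos i0)) (hβ.2 ⟨i0, rfl⟩)
  have hαβ : α * βI < 2 := by
    have := (lt_div_iff₀ hβpos).mp hα2
    linarith
  have hk : 0 < 2*α - α^2*βI := by nlinarith
  have hspec : ∀ i, specNorm (rowSub A (B i)) ^ 2 ≤ βI * frobSq (rowSub A (B i)) := by
    intro i
    have h := hβ.2 ⟨i, rfl⟩
    rw [div_le_iff₀ (hfpos i)] at h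
    linarith
  -- partition of the row index set
  have hpart : ∀ g : Fin m → ℝ, ∑ l, g l = ∑ i, ∑ l ∈ B i, g l := by
    intro g
    have huniv : (Finset.univ : Finset (Fin m)) = Finset.univ.biUnion B := by
      ext l
      simp only [Finset.mem_univ, Finset.mem_biUnion, true_iff]
      obtain ⟨i, hi⟩ := hcover l
      exact ⟨i, by simp, hi⟩
    rw [huniv, Finset.sum_biUnion]
    intro i _ j _ hij
    exact hdisj i j hij
  have hrow : ∀ i (v : Fin n → ℝ),
      norm2Sq (rowSub A (B i) *ᵥ v) = ∑ l ∈ B i, ((A *ᵥ v) l)^2 := by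
    intro i v
    rw [norm2Sq, ← Finset.sum_coe_sort (B i) (fun l => ((A *ᵥ v) l)^2)]
    rfl
  have hFsum : ∑ i, frobSq (rowSub A (B i)) = frobSq A := by
    rw [frobSq, hpart (fun l => ∑ j, (A l j)^2)]
    refine Finset.sum_congr rfl fun i _ => ?_
    rw [frobSq, ← Finset.sum_coe_sort (B i) (fun l => ∑ j, (A l j)^2)]
    rfl
  have hUsum : ∑ i, norm2Sq (rowSub A (B i) *ᵥ e) = norm2Sq (A *ᵥ e) := by
    rw [norm2Sq, hpart (fun l => ((A *ᵥ e) l)^2)]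
    exact Finset.sum_congr rfl fun i _ => hrow i e
  -- per-block bound
  have hterm : ∀ i, (frobSq (rowSub A (B i)) / frobSq A) *
        norm2Sq (x - (α / frobSq (rowSub A (B i))) •
            ((rowSub A (B i))ᵀ * rowSub A (B i)).mulVec e - P.mulVec b)
      ≤ (frobSq (rowSub A (B i)) / frobSq A) * norm2Sq e
        - ((2*α - α^2*βI) / frobSq A) * norm2Sq (rowSub A (B i) *ᵥ e) := by
    intro i
    set M := rowSub A (B i) with hM
    set f := frobSq M with hf
    have hf0 : f ≠ 0 := ne_of_gt (hfpos i)
    have hF0 : frobSq A ≠ 0 := ne_of_gt hFpos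
    have hvec : x - (α / f) • ((Mᵀ * M) *ᵥ e) - P.mulVec b
        = e - (α / f) • ((Mᵀ * M) *ᵥ e) := by
      rw [he]
      exact sub_right_comm x ((α / f) • ((Mᵀ * M) *ᵥ e)) (P.mulVec b)
    rw [hvec, norm2Sq_sub_smul]
    have hdot : e ⬝ᵥ ((Mᵀ * M) *ᵥ e) = norm2Sq (M *ᵥ e) := by
      rw [← mulVec_mulVec, dotProduct_mulVec, vecMul_transpose, norm2Sq_eq_dot]
    have hnv : norm2Sq ((Mᵀ * M) *ᵥ e) ≤ βI * f * norm2Sq (M *ᵥ e) := by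
      calc norm2Sq ((Mᵀ * M) *ᵥ e) = norm2Sq (Mᵀ *ᵥ (M *ᵥ e)) := by rw [mulVec_mulVec]
        _ ≤ specNorm Mᵀ ^ 2 * norm2Sq (M *ᵥ e) := norm2Sq_mulVec_le _ _
        _ = specNorm M ^ 2 * norm2Sq (M *ᵥ e) := by rw [specNorm_transpose]
        _ ≤ βI * f * norm2Sq (M *ᵥ e) :=
            mul_le_mul_of_nonneg_right (hspec i) (norm2Sq_nonneg _)
    rw [hdot]
    have h1 : (α/f)^2 * norm2Sq ((Mᵀ * M) *ᵥ e)
        ≤ (α/f)^2 * (βI * f * norm2Sq (M *ᵥ e)) :=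
      mul_le_mul_of_nonneg_left hnv (sq_nonneg _)
    have hfF : (0:ℝ) ≤ f / frobSq A := le_of_lt (div_pos (hfpos i) hFpos)
    calc (f / frobSq A) *
          (norm2Sq e - 2*(α/f)*norm2Sq (M *ᵥ e) + (α/f)^2 * norm2Sq ((Mᵀ * M) *ᵥ e))
        ≤ (f / frobSq A) *
          (norm2Sq e - 2*(α/f)*norm2Sq (M *ᵥ e) + (α/f)^2 * (βI * f * norm2Sq (M *ᵥ e))) :=
          mul_le_mul_of_nonneg_left (by linarith) hfF
      _ = (f / frobSq A) * norm2Sq e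
          - ((2*α - α^2*βI) / frobSq A) * norm2Sq (M *ᵥ e) := by
          field_simp
          ring
  calc ∑ i, (frobSq (rowSub A (B i)) / frobSq A) *
        norm2Sq (x - (α / frobSq (rowSub A (B i))) •
            ((rowSub A (B i))ᵀ * rowSub A (B i)).mulVec e - P.mulVec b)
      ≤ ∑ i, ((frobSq (rowSub A (B i)) / frobSq A) * norm2Sq e
          - ((2*α - α^2*βI) / frobSq A) * norm2Sq (rowSub A (B i) *ᵥ e)) :=
        Finset.sum_le_sum fun i _ => hterm i
    _ = norm2Sq e - ((2*α - α^2*βI) / frobSq A) * norm2Sq (A *ᵥ e) := by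
        rw [Finset.sum_sub_distrib, ← Finset.sum_mul, ← Finset.sum_div, hFsum,
          div_self (ne_of_gt hFpos), one_mul, ← Finset.mul_sum, hUsum]
    _ ≤ norm2Sq e - ((2*α - α^2*βI) / frobSq A) * (σr^2 * norm2Sq e) := by
        have hsp := spectral_bound A hH σr hleast w e hw
        have hcoef : (0:ℝ) ≤ (2*α - α^2*βI) / frobSq A := le_of_lt (div_pos hk hFpos)
        nlinarith
    _ = (1 - (2 * α - α ^ 2 * βI) * σr ^ 2 / frobSq A) * norm2Sq e := by
        field_simp
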